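/- The first prolongation of the Lie algebra o(r) ⊕ o(s) (block-diagonal skew-symmetric matrices inside gl(r+s, ℝ)) is zero: if S : ℝⁿ → o(r) ⊕ o(s) is linear and S(v)w = S(w)v for all v, w ∈ ℝⁿ, then S = 0. -/
import Mathlib


/-- The first prolongation of `o(r) ⊕ o(s)` (block-diagonal skew-symmetric matrices in
`gl(r+s,ℝ)`, indexed by `Fin r ⊕ Fin s`) vanishes: if `S : ℝⁿ → o(r) ⊕ o(s)` is linear
and `S(v)w = S(w)v` for all `v, w`, then `S = 0`. -/
theorem first_prolongation_orthogonal_sum_eq_zero (r s : ℕ)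
    (S : ((Fin r ⊕ Fin s) → ℝ) →ₗ[ℝ] Matrix (Fin r ⊕ Fin s) (Fin r ⊕ Fin s) ℝ)
    (hskew : ∀ v, (S v).transpose = -(S v))
    (hblock : ∀ v (i : Fin r) (j : Fin s),
      S v (Sum.inl i) (Sum.inr j) = 0 ∧ S v (Sum.inr j) (Sum.inl i) = 0)
    (hsymm : ∀ v w, (S v).mulVec w = (S w).mulVec v) :
    S = 0 := by
  set f : (Fin r ⊕ Fin s) → (Fin r ⊕ Fin s) → (Fin r ⊕ Fin s) → ℝ :=
    fun a b c => S (Pi.single a 1) b c with hf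
  -- skew-symmetry in the last two arguments
  have hsk : ∀ v (b c : Fin r ⊕ Fin s), S v b c = - S v c b := by
    intro v b c
    have := congrFun (congrFun (hskew v) c) b
    simpa [Matrix.transpose_apply] using this
  -- symmetry swapping first and third arguments
  have hsw : ∀ a b c, f a b c = f c b a := by
    intro a b c
    have h := congrFun (hsymm (Pi.single a 1) (Pi.single c 1)) b
    simpa [Matrix.mulVec, dotProduct, Pi.single_apply, hf,
      Finset.sum_ite_eq'] using h
  -- the classical six-step argument
  have hzero : ∀ a b c, f a b c = 0 := by
    intro a b c
    have h1 : f a b c = - f a c b := hsk _ _ _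
    have h2 : f a c b = f b c a := hsw a c b
    have h3 : f b c a = - f b a c := hsk _ _ _
    have h4 : f b a c = f c a b := hsw b a c
    have h5 : f c a b = - f c b a := hsk _ _ _
    have h6 : f c b a = f a b c := hsw c b a
    linarith [h1, h2, h3, h4, h5, h6]
  -- conclude
  ext a b c
  simpa [hf] using hzero a b c
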